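/- Let a<b be reals and f ∈ C¹([a,b],ℝ) be such that |f(x)| + |f'(x)| > 0 for all x ∈ [a,b], and f(a) ≠ 0, f(b) ≠ 0. Set ω(f) := inf_{x∈[a,b]} (|f(x)|+|f'(x)|) and let Z([a,b]) be the number of zeros of f in [a,b]. Then for every δ with 0 < δ < min(ω(f), |f(a)|, |f(b)|), one has the exact Kac-Rice formula Z([a,b]) = (1/(2δ)) ∫_a^b |f'(x)| 1_{{|f(x)| < δ}} dx. -/
import Mathlib

open MeasureTheory Set

lemma kacrice_aux (a b : ℝ) (f f' : ℝ → ℝ) (δ : ℝ) (hδ : 0 < δ)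
    (hderiv : ∀ x ∈ Set.Icc a b, HasDerivWithinAt f (f' x) (Set.Icc a b) x)
    (hcont : ContinuousOn f' (Set.Icc a b))
    (hf : ContinuousOn f (Set.Icc a b))
    (hlb : ∀ x ∈ Set.Icc a b, |f x| ≤ δ → f' x ≠ 0)
    (hfa : δ < |f a|) (hfb : δ < |f b|)
    (z : ℝ) (hz : z ∈ Set.Icc a b) (hfz : |f z| < δ) :
    ∃ c d : ℝ, a < c ∧ c < z ∧ z < d ∧ d < b ∧ |f c| = δ ∧ |f d| = δ ∧
      (∀ x ∈ Set.Ioo c d, |f x| < δ) ∧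
      (∀ x ∈ Set.Icc a z, δ ≤ |f x| → x ≤ c) ∧
      (∀ x ∈ Set.Icc z b, δ ≤ |f x| → d ≤ x) ∧
      Set.InjOn f (Set.Icc c d) ∧
      (∫ x in c..d, |f' x|) = |f d - f c| := by
  obtain ⟨haz, hzb⟩ := hz
  -- the left endpoint
  set A : Set ℝ := {x ∈ Set.Icc a z | δ ≤ |f x|} with hA
  have hAne : a ∈ A := ⟨⟨le_refl a, haz⟩, hfa.le⟩
  have hAbdd : BddAbove A := ⟨z, fun x hx => hx.1.2⟩
  have hAclosed : IsClosed A := by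
    have : A = Set.Icc a z ∩ (fun x => |f x|) ⁻¹' (Set.Ici δ) := rfl
    rw [this]
    exact ContinuousOn.preimage_isClosed_of_isClosed
      ((hf.mono (Set.Icc_subset_Icc_right hzb)).abs) isClosed_Icc isClosed_Ici
  set c := sSup A with hc
  have hcA : c ∈ A := hAclosed.csSup_mem ⟨a, hAne⟩ hAbdd
  have hcub : ∀ x ∈ Set.Icc a z, δ ≤ |f x| → x ≤ c := fun x hx h => le_csSup hAbdd ⟨hx, h⟩
  have hcz : c < z := lt_of_le_of_ne hcA.1.2 (fun h => absurd (h ▸ hcA.2) (not_le.2 hfz))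
  have hIoc : ∀ x ∈ Set.Ioc c z, |f x| < δ := by
    intro x hx
    by_contra h
    exact absurd (hcub x ⟨(hcA.1.1.trans hx.1.le), hx.2⟩ (not_lt.1 h)) (not_le.2 hx.1)
  have hfc : |f c| = δ := by
    refine le_antisymm ?_ hcA.2
    have hsub : Set.Ioo c z ⊆ Set.Icc a b := fun x hx =>
      ⟨hcA.1.1.trans hx.1.le, hx.2.le.trans hzb⟩
    have htend : Filter.Tendsto (fun x => |f x|) (nhdsWithin c (Set.Ioo c z)) (nhds (|f c|)) := by
      have := (hf c ⟨hcA.1.1, hcA.1.2.trans hzb⟩).mono hsub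
      exact this.abs.tendsto
    have hne : (nhdsWithin c (Set.Ioo c z)).NeBot := by
      rw [nhdsWithin_Ioo_eq_nhdsGT hcz]
      infer_instance
    refine le_of_tendsto htend ?_
    filter_upwards [self_mem_nhdsWithin] with x hx
    exact (hIoc x ⟨hx.1, hx.2.le⟩).le
  have hac : a < c := by
    rcases eq_or_lt_of_le hcA.1.1 with h | h
    · exact absurd (h ▸ hfc) (ne_of_gt hfa)
    · exact h
  -- the right endpoint
  set B : Set ℝ := {x ∈ Set.Icc z b | δ ≤ |f x|} with hB
  have hBne : b ∈ B := ⟨⟨hzb, le_refl b⟩, hfb.le⟩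
  have hBbdd : BddBelow B := ⟨z, fun x hx => hx.1.1⟩
  have hBclosed : IsClosed B := by
    have : B = Set.Icc z b ∩ (fun x => |f x|) ⁻¹' (Set.Ici δ) := rfl
    rw [this]
    exact ContinuousOn.preimage_isClosed_of_isClosed
      ((hf.mono (Set.Icc_subset_Icc_left haz)).abs) isClosed_Icc isClosed_Ici
  set d := sInf B with hd
  have hdB : d ∈ B := hBclosed.csInf_mem ⟨b, hBne⟩ hBbdd
  have hdlb : ∀ x ∈ Set.Icc z b, δ ≤ |f x| → d ≤ x := fun x hx h => csInf_le hBbdd ⟨hx, h⟩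
  have hzd : z < d := lt_of_le_of_ne hdB.1.1 (fun h => absurd (h ▸ hdB.2) (not_le.2 hfz))
  have hIco : ∀ x ∈ Set.Ico z d, |f x| < δ := by
    intro x hx
    by_contra h
    exact absurd (hdlb x ⟨hx.1, hx.2.le.trans hdB.1.2⟩ (not_lt.1 h)) (not_le.2 hx.2)
  have hfd : |f d| = δ := by
    refine le_antisymm ?_ hdB.2
    have hsub : Set.Ioo z d ⊆ Set.Icc a b := fun x hx =>
      ⟨haz.trans hx.1.le, hx.2.le.trans hdB.1.2⟩
    have htend : Filter.Tendsto (fun x => |f x|) (nhdsWithin d (Set.Ioo z d)) (nhds (|f d|)) := by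
      have := (hf d ⟨haz.trans hdB.1.1, hdB.1.2⟩).mono hsub
      exact this.abs.tendsto
    have hne : (nhdsWithin d (Set.Ioo z d)).NeBot := by
      rw [nhdsWithin_Ioo_eq_nhdsLT hzd]
      infer_instance
    refine le_of_tendsto htend ?_
    filter_upwards [self_mem_nhdsWithin] with x hx
    exact (hIco x ⟨hx.1.le, hx.2⟩).le
  have hdb : d < b := by
    rcases eq_or_lt_of_le hdB.1.2 with h | h
    · exact absurd (h ▸ hfd) (ne_of_gt hfb)
    · exact h
  have hcd : c < d := hcz.trans hzd
  -- basic interval facts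
  have hIccsub : Set.Icc c d ⊆ Set.Icc a b := fun x hx =>
    ⟨hac.le.trans hx.1, hx.2.trans hdb.le⟩
  have hIoolt : ∀ x ∈ Set.Ioo c d, |f x| < δ := by
    intro x hx
    rcases le_or_gt x z with h | h
    · exact hIoc x ⟨hx.1, h⟩
    · exact hIco x ⟨h.le, hx.2⟩
  have hIccle : ∀ x ∈ Set.Icc c d, |f x| ≤ δ := by
    intro x hx
    rcases eq_or_lt_of_le hx.1 with h | h
    · exact le_of_eq (h ▸ hfc)
    rcases eq_or_lt_of_le hx.2 with h2 | h2
    · exact le_of_eq (h2 ▸ hfd)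
    · exact (hIoolt x ⟨h, h2⟩).le
  have hf'ne : ∀ x ∈ Set.Icc c d, f' x ≠ 0 := fun x hx =>
    hlb x (hIccsub hx) (hIccle x hx)
  -- derivative facts
  have hderivAt : ∀ x ∈ Set.Ioo c d, HasDerivAt f (f' x) x := by
    intro x hx
    refine (hderiv x (hIccsub ⟨hx.1.le, hx.2.le⟩)).hasDerivAt ?_
    exact Icc_mem_nhds (hac.trans hx.1) (hx.2.trans hdb)
  have hderivEq : ∀ x ∈ Set.Ioo c d, deriv f x = f' x := fun x hx => (hderivAt x hx).deriv
  have hcontf : ContinuousOn f (Set.Icc c d) := hf.mono hIccsub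
  have hcontf' : ContinuousOn f' (Set.Icc c d) := hcont.mono hIccsub
  -- sign dichotomy
  have hsign : (∀ x ∈ Set.Icc c d, 0 < f' x) ∨ (∀ x ∈ Set.Icc c d, f' x < 0) := by
    have hcmem : c ∈ Set.Icc c d := ⟨le_refl c, hcd.le⟩
    have key : ∀ x ∈ Set.Icc c d, ∀ y ∈ Set.Icc c d, 0 < f' x → f' y < 0 → False := by
      intro x hx y hy hxp hyn
      have hsub : Set.uIcc x y ⊆ Set.Icc c d := Set.uIcc_subset_Icc hx hy
      have h0 : (0 : ℝ) ∈ Set.uIcc (f' x) (f' y) := by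
        rw [Set.mem_uIcc]; right; exact ⟨hyn.le, hxp.le⟩
      obtain ⟨t, ht, ht0⟩ := intermediate_value_uIcc (hcontf'.mono hsub) h0
      exact hf'ne t (hsub ht) ht0
    rcases lt_or_gt_of_ne (hf'ne c hcmem) with h | h
    · right
      intro x hx
      by_contra hle
      have hxp : 0 < f' x := lt_of_le_of_ne (not_lt.1 hle) (Ne.symm (hf'ne x hx))
      exact key x hx c hcmem hxp h
    · left
      intro x hx
      by_contra hle
      have hxn : f' x < 0 := lt_of_le_of_ne (not_lt.1 hle) (hf'ne x hx)
      exact key c hcmem x hx h hxn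
  -- FTC
  have hFTC : (∫ x in c..d, f' x) = f d - f c := by
    refine intervalIntegral.integral_eq_sub_of_hasDeriv_right_of_le hcd.le hcontf
      (fun x hx => (hderivAt x hx).hasDerivWithinAt) ?_
    exact (hcontf'.mono (by rw [Set.uIcc_of_le hcd.le])).intervalIntegrable
  rcases hsign with hpos | hneg
  · -- increasing case
    have hmono : StrictMonoOn f (Set.Icc c d) := by
      refine strictMonoOn_of_deriv_pos (convex_Icc c d) hcontf ?_
      intro x hx
      rw [interior_Icc] at hx
      rw [hderivEq x hx]
      exact hpos x ⟨hx.1.le, hx.2.le⟩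
    refine ⟨c, d, hac, hcz, hzd, hdb, hfc, hfd, hIoolt, hcub, hdlb, hmono.injOn, ?_⟩
    have hint : (∫ x in c..d, |f' x|) = ∫ x in c..d, f' x := by
      refine intervalIntegral.integral_congr ?_
      intro x hx
      rw [Set.uIcc_of_le hcd.le] at hx
      exact abs_of_pos (hpos x hx)
    rw [hint, hFTC, abs_of_pos (sub_pos.2 (hmono ⟨le_refl c, hcd.le⟩ ⟨hcd.le, le_refl d⟩ hcd))]
  · -- decreasing case
    have hmono : StrictAntiOn f (Set.Icc c d) := by
      refine strictAntiOn_of_deriv_neg (convex_Icc c d) hcontf ?_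
      intro x hx
      rw [interior_Icc] at hx
      rw [hderivEq x hx]
      exact hneg x ⟨hx.1.le, hx.2.le⟩
    refine ⟨c, d, hac, hcz, hzd, hdb, hfc, hfd, hIoolt, hcub, hdlb, hmono.injOn, ?_⟩
    have hint : (∫ x in c..d, |f' x|) = ∫ x in c..d, -f' x := by
      refine intervalIntegral.integral_congr ?_
      intro x hx
      rw [Set.uIcc_of_le hcd.le] at hx
      exact abs_of_neg (hneg x hx)
    rw [hint, intervalIntegral.integral_neg, hFTC,
      abs_of_neg (sub_neg.2 (hmono ⟨le_refl c, hcd.le⟩ ⟨hcd.le, le_refl d⟩ hcd))]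
theorem statement11
    (a b : ℝ) (hab : a < b) (f f' : ℝ → ℝ)
    (hderiv : ∀ x ∈ Set.Icc a b, HasDerivWithinAt f (f' x) (Set.Icc a b) x)
    (hcont : ContinuousOn f' (Set.Icc a b))
    (hnz : ∀ x ∈ Set.Icc a b, 0 < |f x| + |f' x|)
    (ha : f a ≠ 0) (hb : f b ≠ 0) :
    ∀ δ : ℝ, 0 < δ →
      δ < min (sInf ((fun x => |f x| + |f' x|) '' Set.Icc a b)) (min |f a| |f b|) →
      ({x ∈ Set.Icc a b | f x = 0}.ncard : ℝ) =
        (∫ x in a..b, if |f x| < δ then |f' x| else 0) / (2 * δ) := by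
  intro δ hδ hδlt
  rw [lt_min_iff, lt_min_iff] at hδlt
  have hδω := hδlt.1
  have hfa := hδlt.2.1
  have hfb := hδlt.2.2
  have hf : ContinuousOn f (Set.Icc a b) := fun x hx => (hderiv x hx).continuousWithinAt
  have hlb : ∀ x ∈ Set.Icc a b, |f x| ≤ δ → f' x ≠ 0 := by
    intro x hx hle h0
    have h1 : sInf ((fun x => |f x| + |f' x|) '' Set.Icc a b) ≤ |f x| + |f' x| :=
      csInf_le ⟨0, fun y hy => by
        obtain ⟨t, _, rfl⟩ := hy
        positivity⟩ (Set.mem_image_of_mem _ hx)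
    rw [h0] at h1
    simp only [abs_zero, add_zero] at h1
    exact absurd (h1.trans hle) (not_le.2 hδω)
  have key : ∀ z : ℝ, ∃ c d : ℝ, z ∈ Set.Icc a b → |f z| < δ →
      a < c ∧ c < z ∧ z < d ∧ d < b ∧ |f c| = δ ∧ |f d| = δ ∧
      (∀ x ∈ Set.Ioo c d, |f x| < δ) ∧
      (∀ x ∈ Set.Icc a z, δ ≤ |f x| → x ≤ c) ∧
      (∀ x ∈ Set.Icc z b, δ ≤ |f x| → d ≤ x) ∧
      Set.InjOn f (Set.Icc c d) ∧
      (∫ x in c..d, |f' x|) = |f d - f c| := by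
    intro z
    by_cases hz : z ∈ Set.Icc a b ∧ |f z| < δ
    · obtain ⟨c, d, props⟩ :=
        kacrice_aux a b f f' δ hδ hderiv hcont hf hlb hfa hfb z hz.1 hz.2
      exact ⟨c, d, fun _ _ => props⟩
    · exact ⟨0, 0, fun h1 h2 => absurd ⟨h1, h2⟩ hz⟩
  choose C D hCD using key
  set S : Set ℝ := {x ∈ Set.Icc a b | f x = 0} with hS
  have hzprops := fun (z : ℝ) (hz : z ∈ S) =>
    hCD z hz.1 (by rw [hz.2, abs_zero]; exact hδ)
  -- uniqueness of zeros in each interval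
  have huniq : ∀ z ∈ S, ∀ w ∈ S, w ∈ Set.Ioo (C z) (D z) → w = z := by
    intro z hz w hw hmem
    obtain ⟨_, hcz, hzd, _, _, _, _, _, _, hinj, _⟩ := hzprops z hz
    exact hinj ⟨hmem.1.le, hmem.2.le⟩ ⟨hcz.le, hzd.le⟩ (by rw [hw.2, hz.2])
  -- S is finite
  have hSclosed : IsClosed S := by
    have : S = Set.Icc a b ∩ f ⁻¹' {0} := by
      ext x; simp [hS, Set.mem_sep_iff]
    rw [this]
    exact hf.preimage_isClosed_of_isClosed isClosed_Icc isClosed_singleton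
  have hScompact : IsCompact S := isCompact_Icc.of_isClosed_subset hSclosed (fun x hx => hx.1)
  have hcover : S ⊆ ⋃ z ∈ S, Set.Ioo (C z) (D z) := by
    intro z hz
    obtain ⟨_, hcz, hzd, _⟩ := hzprops z hz
    exact Set.mem_biUnion hz ⟨hcz, hzd⟩
  obtain ⟨T, hTsub, hTfin, hTcover⟩ :=
    hScompact.elim_finite_subcover_image (fun z _ => isOpen_Ioo) hcover
  have hSfin : S.Finite := by
    refine hTfin.subset ?_
    intro w hw
    obtain ⟨z, hzT, hmem⟩ := Set.mem_iUnion₂.1 (hTcover hw)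
    exact (huniq z (hTsub hzT) w hw hmem) ▸ hzT
  classical
  set F : Finset ℝ := hSfin.toFinset with hF
  have hFmem : ∀ z, z ∈ F ↔ z ∈ S := fun z => hSfin.mem_toFinset
  -- coverage of {|f| < δ}
  set U : Set ℝ := ⋃ z ∈ F, Set.Ioo (C z) (D z) with hU
  have hUsub : U ⊆ Set.Ioc a b := by
    intro x hx
    obtain ⟨z, hzF, hmem⟩ := Set.mem_iUnion₂.1 hx
    obtain ⟨hac, _, _, hdb, _⟩ := hzprops z ((hFmem z).1 hzF)
    exact ⟨hac.trans hmem.1, hmem.2.le.trans hdb.le⟩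
  have hcov2 : Set.EqOn (fun x => if |f x| < δ then |f' x| else 0)
      (U.indicator fun y => |f' y|) (Set.Ioc a b) := by
    intro x hx
    have hxI : x ∈ Set.Icc a b := ⟨hx.1.le, hx.2⟩
    by_cases hfx : |f x| < δ
    · obtain ⟨hac, hcx, hxd, hdb, hfc, hfd, hIoolt, hcub, hdlb, hinj, _⟩ := hCD x hxI hfx
      -- find a zero w in (C x, D x)
      have hcd : C x < D x := hcx.trans hxd
      have hne : f (C x) ≠ f (D x) := fun h =>
        absurd (hinj ⟨le_refl _, hcd.le⟩ ⟨hcd.le, le_refl _⟩ h) (ne_of_lt hcd)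
      have hsubI : Set.Icc (C x) (D x) ⊆ Set.Icc a b := fun y hy =>
        ⟨hac.le.trans hy.1, hy.2.trans hdb.le⟩
      have h0mem : (0 : ℝ) ∈ Set.uIcc (f (C x)) (f (D x)) := by
        rw [Set.mem_uIcc]
        rcases (abs_eq hδ.le).1 hfc with h1 | h1 <;>
          rcases (abs_eq hδ.le).1 hfd with h2 | h2 <;> rw [h1, h2]
        · exact absurd (h1.trans h2.symm) hne
        · right; constructor <;> linarith
        · left; constructor <;> linarith
        · exact absurd (h1.trans h2.symm) hne
      obtain ⟨w, hwmem, hfw⟩ := intermediate_value_uIcc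
        (hf.mono (fun y hy => hsubI ((Set.uIcc_of_le hcd.le) ▸ hy))) h0mem
      rw [Set.uIcc_of_le hcd.le] at hwmem
      have hwne1 : C x ≠ w := by
        intro h; rw [← h] at hfw; rw [hfw] at hfc; simp at hfc; linarith
      have hwne2 : w ≠ D x := by
        intro h; rw [h] at hfw; rw [hfw] at hfd; simp at hfd; linarith
      have hwIoo : w ∈ Set.Ioo (C x) (D x) :=
        ⟨hwmem.1.lt_of_ne hwne1, hwmem.2.lt_of_ne hwne2⟩
      have hwI : w ∈ Set.Icc a b := hsubI hwmem
      have hwS : w ∈ S := ⟨hwI, hfw⟩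
      obtain ⟨hac', hcw, hwd, hdb', hfc', hfd', hIoolt', hcub', hdlb', _, _⟩ := hzprops w hwS
      -- C w = C x and D w = D x
      have hCeq : C w = C x := by
        refine le_antisymm ?_ ?_
        · by_contra h
          have hmem : C w ∈ Set.Ioo (C x) (D x) := ⟨not_le.1 h, hcw.trans hwIoo.2⟩
          exact absurd hfc' (ne_of_lt (hIoolt _ hmem))
        · exact hcub' (C x) ⟨hac.le, hwIoo.1.le⟩ hfc.ge
      have hDeq : D w = D x := by
        refine le_antisymm ?_ ?_
        · exact hdlb' (D x) ⟨hwIoo.2.le, hdb.le⟩ hfd.ge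
        · by_contra h
          have hmem : D w ∈ Set.Ioo (C x) (D x) := ⟨hwIoo.1.trans hwd, not_le.1 h⟩
          exact absurd hfd' (ne_of_lt (hIoolt _ hmem))
      have hxU : x ∈ U := Set.mem_biUnion ((hFmem w).2 hwS)
        (by rw [hCeq, hDeq]; exact ⟨hcx, hxd⟩)
      simp only [if_pos hfx, Set.indicator_of_mem hxU]
    · have hxU : x ∉ U := by
        intro hmem
        obtain ⟨z, hzF, hmem'⟩ := Set.mem_iUnion₂.1 hmem
        obtain ⟨_, _, _, _, _, _, hIoolt, _⟩ := hzprops z ((hFmem z).1 hzF)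
        exact hfx (hIoolt x hmem')
      simp only [if_neg hfx, Set.indicator_of_notMem hxU]
  -- disjointness
  have hdisjkey : ∀ z₁ ∈ S, ∀ z₂ ∈ S, z₁ < z₂ → D z₁ ≤ C z₂ := by
    intro z₁ h₁ z₂ h₂ hlt
    obtain ⟨hac₁, hcz₁, hzd₁, hdb₁, _, hfd₁, _, _, _, _, _⟩ := hzprops z₁ h₁
    obtain ⟨_, _, _, _, _, _, _, hcub₂, _, _, _⟩ := hzprops z₂ h₂
    have hd₁z₂ : D z₁ ≤ z₂ := by
      by_contra h
      exact absurd (huniq z₁ h₁ z₂ h₂ ⟨hcz₁.trans hlt, not_le.1 h⟩) (ne_of_gt hlt)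
    exact hcub₂ (D z₁) ⟨hac₁.le.trans (hcz₁.le.trans hzd₁.le), hd₁z₂⟩ hfd₁.ge
  have hdisj : (F : Set ℝ).Pairwise
      (Function.onFun Disjoint fun z => Set.Ioo (C z) (D z)) := by
    intro z₁ h₁ z₂ h₂ hne
    have hS₁ : z₁ ∈ S := (hFmem z₁).1 h₁
    have hS₂ : z₂ ∈ S := (hFmem z₂).1 h₂
    rcases lt_or_gt_of_ne hne with h | h
    · have := hdisjkey z₁ hS₁ z₂ hS₂ h
      exact Set.disjoint_left.2 fun x hx₁ hx₂ => absurd (hx₁.2.trans_le this) (not_lt.2 hx₂.1.le)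
    · have := hdisjkey z₂ hS₂ z₁ hS₁ h
      exact Set.disjoint_left.2 fun x hx₁ hx₂ => absurd (hx₂.2.trans_le this) (not_lt.2 hx₁.1.le)
  -- the integral computation
  have hmeas : ∀ z ∈ F, MeasurableSet (Set.Ioo (C z) (D z)) := fun z _ => measurableSet_Ioo
  have hUmeas : MeasurableSet U := F.measurableSet_biUnion hmeas
  have hintOn : ∀ z ∈ F, IntegrableOn (fun y => |f' y|) (Set.Ioo (C z) (D z)) := by
    intro z hzF
    obtain ⟨hac, hcz, hzd, hdb, _⟩ := hzprops z ((hFmem z).1 hzF)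
    have : ContinuousOn (fun y => |f' y|) (Set.Icc (C z) (D z)) :=
      (hcont.mono fun y hy => ⟨hac.le.trans hy.1, hy.2.trans hdb.le⟩).abs
    exact (this.integrableOn_Icc).mono_set Set.Ioo_subset_Icc_self
  have hstep : (∫ x in a..b, if |f x| < δ then |f' x| else 0) = (F.card : ℝ) * (2 * δ) := by
    rw [intervalIntegral.integral_of_le hab.le]
    rw [setIntegral_congr_fun measurableSet_Ioc hcov2]
    rw [setIntegral_indicator hUmeas]
    rw [Set.inter_eq_self_of_subset_right hUsub]
    rw [hU, integral_biUnion_finset F hmeas hdisj hintOn]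
    have hterm : ∀ z ∈ F, (∫ x in Set.Ioo (C z) (D z), |f' x|) = 2 * δ := by
      intro z hzF
      have hzS := (hFmem z).1 hzF
      obtain ⟨hac, hcz, hzd, hdb, hfc, hfd, _, _, _, hinj, hint⟩ := hzprops z hzS
      have hcd : C z < D z := hcz.trans hzd
      have : (∫ x in Set.Ioo (C z) (D z), |f' x|) = ∫ x in (C z)..(D z), |f' x| := by
        rw [intervalIntegral.integral_of_le hcd.le, integral_Ioc_eq_integral_Ioo]
      rw [this, hint]
      have hne : f (C z) ≠ f (D z) := fun h =>
        absurd (hinj ⟨le_refl _, hcd.le⟩ ⟨hcd.le, le_refl _⟩ h) (ne_of_lt hcd)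
      rcases (abs_eq hδ.le).1 hfc with h1 | h1 <;>
        rcases (abs_eq hδ.le).1 hfd with h2 | h2 <;> rw [h1, h2]
      · exact absurd (h1.trans h2.symm) hne
      · rw [show -δ - δ = -(2 * δ) by ring, abs_neg, abs_of_pos (by linarith)]
      · rw [show δ - -δ = 2 * δ by ring, abs_of_pos (by linarith)]
      · exact absurd (h1.trans h2.symm) hne
    rw [Finset.sum_congr rfl hterm, Finset.sum_const, nsmul_eq_mul]
  rw [hstep]
  have hcard : S.ncard = F.card := Set.ncard_eq_toFinset_card S hSfin
  rw [hcard]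
  field_simp
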